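/- Consider the dimensionless regularized rim-lamella system on [τ, t*] with t + t0 > 0, t + t1 > 0, h(t) > 0 on [τ, t*], We > 0 and 1 − cos θ > 0, and suppose the velocity defect satisfies Δ(t) ≤ c(t) for all t ∈ [τ, t*]. Then R(t*)·√(h(t*)) ≥ R(τ)·√(h(τ)) − √((1 − cos θ)/We)·(t* − τ); in particular R(t*) ≥ ( R(τ)·√(h(τ)) − √((1 − cos θ)/We)·(t* − τ) ) / √(h(t*)). -/

import Mathlib

open Real

/-- In the dimensionless regularized rim-lamella system on `[τ, t*]`
with `h > 0`, `We > 0`, `1 − cos θ > 0`, if the velocity defect satisfies `Δ(t) ≤ c(t)`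
on `[τ, t*]`, then `R(t*)·√(h(t*)) ≥ R(τ)·√(h(τ)) − √((1 − cos θ)/We)·(t* − τ)`; in
particular `R(t*) ≥ (R(τ)·√(h(τ)) − √((1 − cos θ)/We)·(t* − τ))/√(h(t*))`. -/
theorem lower_bound_at_tstar
    (We t0 t1 a θ τ tstar : ℝ) (hWe : We > 0) (ha : a > 0)
    (hθ : 1 - Real.cos θ > 0) (hτt : τ ≤ tstar)
    (R U V h hbl ubar c : ℝ → ℝ)
    (hbl_def : ∀ t, hbl t = a * Real.sqrt (t + t1))
    (hubar_def : ∀ t, ubar t = (R t / (t + t0)) * (1 - hbl t / h t))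
    (hc_def : ∀ t, c t = Real.sqrt ((1 - Real.cos θ) / (We * h t)))
    (hpos : ∀ t ∈ Set.Icc τ tstar, t + t0 > 0 ∧ t + t1 > 0 ∧ h t > 0)
    (hR : ∀ t ∈ Set.Icc τ tstar, HasDerivAt R (U t) t)
    (hh : ∀ t ∈ Set.Icc τ tstar, HasDerivAt h (-(2 / (t + t0)) * (h t - hbl t)) t)
    (hV : ∀ t ∈ Set.Icc τ tstar, HasDerivAt V (2 * π * R t * h t * (ubar t - U t)) t)
    (hU : ∀ t ∈ Set.Icc τ tstar, DifferentiableAt ℝ U t)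
    (hmom : ∀ t ∈ Set.Icc τ tstar,
      V t * deriv U t
        = 2 * π * R t * h t * (ubar t - U t) ^ 2 - 2 * π * R t * (1 - Real.cos θ) / We)
    (hdefect : ∀ t ∈ Set.Icc τ tstar, ubar t - U t ≤ c t) :
    R tstar * Real.sqrt (h tstar)
        ≥ R τ * Real.sqrt (h τ) - Real.sqrt ((1 - Real.cos θ) / We) * (tstar - τ)
    ∧ R tstar
        ≥ (R τ * Real.sqrt (h τ) - Real.sqrt ((1 - Real.cos θ) / We) * (tstar - τ))
            / Real.sqrt (h tstar) := by
  set K := Real.sqrt ((1 - Real.cos θ) / We) with hK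
  set f : ℝ → ℝ := fun t => R t * Real.sqrt (h t) + K * t with hf
  -- derivative of f on Icc
  have hderiv : ∀ t ∈ Set.Icc τ tstar,
      HasDerivAt f ((U t - ubar t) * Real.sqrt (h t) + K) t := by
    intro t ht
    obtain ⟨ht0, ht1, hht⟩ := hpos t ht
    have hsne : h t ≠ 0 := ne_of_gt hht
    have hsq : HasDerivAt (fun s => Real.sqrt (h s))
        (1 / (2 * Real.sqrt (h t)) * (-(2 / (t + t0)) * (h t - hbl t))) t :=
      (Real.hasDerivAt_sqrt hsne).comp t (hh t ht)
    have hprod := ((hR t ht).mul hsq).add ((hasDerivAt_id t).const_mul K)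
    refine hprod.congr_deriv ?_
    symm
    have hs : Real.sqrt (h t) * Real.sqrt (h t) = h t := Real.mul_self_sqrt hht.le
    have hspos : Real.sqrt (h t) > 0 := Real.sqrt_pos.mpr hht
    rw [hubar_def]
    field_simp
    linear_combination (-(R t * (h t - hbl t))) * hs
  -- derivative is nonneg
  have hnn : ∀ t ∈ Set.Icc τ tstar, 0 ≤ (U t - ubar t) * Real.sqrt (h t) + K := by
    intro t ht
    obtain ⟨ht0, ht1, hht⟩ := hpos t ht
    have hspos : Real.sqrt (h t) > 0 := Real.sqrt_pos.mpr hht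
    have hcK : c t * Real.sqrt (h t) = K := by
      rw [hc_def, hK, ← Real.sqrt_mul (by positivity)]
      congr 1
      field_simp
    have hd := hdefect t ht
    nlinarith [mul_le_mul_of_nonneg_right hd hspos.le]
  -- f is monotone on Icc
  have hmono : MonotoneOn f (Set.Icc τ tstar) := by
    apply monotoneOn_of_deriv_nonneg (convex_Icc τ tstar)
    · intro t ht
      exact ((hderiv t ht).differentiableAt.continuousAt).continuousWithinAt
    · intro t ht
      rw [interior_Icc] at ht
      exact ((hderiv t (Set.mem_Icc_of_Ioo ht)).differentiableAt).differentiableWithinAt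
    · intro t ht
      rw [interior_Icc] at ht
      rw [(hderiv t (Set.mem_Icc_of_Ioo ht)).deriv]
      exact hnn t (Set.mem_Icc_of_Ioo ht)
  have hfle : f τ ≤ f tstar :=
    hmono (Set.left_mem_Icc.mpr hτt) (Set.right_mem_Icc.mpr hτt) hτt
  have hmain : R tstar * Real.sqrt (h tstar)
      ≥ R τ * Real.sqrt (h τ) - K * (tstar - τ) := by
    simp only [hf] at hfle; linarith
  refine ⟨hmain, ?_⟩
  have hspos : Real.sqrt (h tstar) > 0 :=
    Real.sqrt_pos.mpr (hpos tstar (Set.right_mem_Icc.mpr hτt)).2.2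
  rw [ge_iff_le, div_le_iff₀ hspos]
  linarith
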